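/- Let l > -1/2 and let K_l(r,s) = (2l+1)^{-1} min(r,s)^{l+1} max(r,s)^{-l} for r,s > 0. Then for any points 0 < r_1 < r_2 < … < r_N, the N×N matrix (K_l(r_i, r_j))_{i,j} is positive semidefinite. -/

import Mathlib

open Finset Matrix Real

private lemma ite_mul_helper (a b c : ℝ) (p q : Prop) [Decidable p] [Decidable q] :
    a * b * (if p ∧ q then c else 0) =
      (if p then a else 0) * (if q then b else 0) * c := by
  split_ifs <;> simp_all

/-- The zero-energy Green function of the Bessel operator,
`K_l(r,s) = min(r,s)^{l+1} max(r,s)^{-l} / (2l+1)`, restricted to any finite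
family of points `0 < r₁ < ⋯ < r_N`, yields a positive semidefinite matrix. -/
theorem bessel_kernel_posSemidef {N : ℕ} (l : ℝ) (hl : -1/2 < l)
    (r : Fin N → ℝ) (hr : ∀ i, 0 < r i) (hmono : StrictMono r) :
    (Matrix.of fun i j =>
        (min (r i) (r j)) ^ (l + 1) * (max (r i) (r j)) ^ (-l) / (2 * l + 1)
      : Matrix (Fin N) (Fin N) ℝ).PosSemidef := by
  have h2l : (0:ℝ) < 2 * l + 1 := by linarith
  refine Matrix.PosSemidef.of_dotProduct_mulVec_nonneg ?_ ?_
  · ext i j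
    simp only [conjTranspose_apply, of_apply, star_trivial]
    rw [min_comm, max_comm]
  · intro x
    set y : Fin N → ℝ := fun i => x i * r i ^ (-l) with hy
    set t : ℕ → ℝ := fun k => if h : k < N then r ⟨k, h⟩ ^ (2*l+1) else 0 with ht
    set d : ℕ → ℝ := fun k => t k - (if k = 0 then 0 else t (k-1)) with hd
    have htval : ∀ (k : ℕ) (h : k < N), t k = r ⟨k, h⟩ ^ (2*l+1) := by
      intro k h; rw [ht]; simp [h]
    have hdnn : ∀ k < N, 0 ≤ d k := by
      intro k hk
      rw [hd]
      dsimp only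
      split_ifs with h
      · rw [sub_zero, htval k hk]
        exact (Real.rpow_pos_of_pos (hr _) _).le
      · rw [sub_nonneg, htval k hk, htval (k-1) (by omega)]
        apply Real.rpow_le_rpow (hr _).le _ h2l.le
        exact hmono.monotone (Fin.mk_le_mk.mpr (by omega))
    have htele : ∀ m, m < N → ∑ k ∈ Finset.range (m+1), d k = t m := by
      intro m hm
      induction m with
      | zero => simp [hd]
      | succ n ih =>
        have hstep : d (n+1) = t (n+1) - t n := by rw [hd]; simp
        rw [Finset.sum_range_succ, ih (by omega), hstep]
        ring
    have htsum : ∀ m, m < N →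
        t m = ∑ k ∈ Finset.range N, if k ≤ m then d k else 0 := by
      intro m hm
      rw [← htele m hm, ← Finset.sum_filter]
      congr 1
      ext k
      simp only [Finset.mem_filter, Finset.mem_range]
      omega
    -- entry formula
    have hent : ∀ i j : Fin N,
        (min (r i) (r j)) ^ (l + 1) * (max (r i) (r j)) ^ (-l) =
          t (min (i:ℕ) (j:ℕ)) * (r i ^ (-l) * r j ^ (-l)) := by
      intro i j
      rcases le_total i j with hij | hij
      · have hn : (i:ℕ) ≤ (j:ℕ) := hij
        have hrij : r i ≤ r j := hmono.monotone hij
        have hone : r i ^ l * r i ^ (-l) = 1 := by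
          rw [← Real.rpow_add (hr i)]; simp
        have hsplit : r i ^ (2*l+1) = r i ^ (l+1) * r i ^ l := by
          rw [show (2*l+1) = (l+1)+l by ring, Real.rpow_add (hr i)]
        rw [Nat.min_eq_left hn, htval _ i.isLt, Fin.eta,
          min_eq_left hrij, max_eq_right hrij, hsplit]
        linear_combination (-(r i ^ (l+1) * r j ^ (-l))) * hone
      · have hn : (j:ℕ) ≤ (i:ℕ) := hij
        have hrij : r j ≤ r i := hmono.monotone hij
        have hone : r j ^ l * r j ^ (-l) = 1 := by
          rw [← Real.rpow_add (hr j)]; simp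
        have hsplit : r j ^ (2*l+1) = r j ^ (l+1) * r j ^ l := by
          rw [show (2*l+1) = (l+1)+l by ring, Real.rpow_add (hr j)]
        rw [Nat.min_eq_right hn, htval _ j.isLt, Fin.eta,
          min_eq_right hrij, max_eq_left hrij, hsplit]
        linear_combination (-(r j ^ (l+1) * r i ^ (-l))) * hone
    -- the quadratic form
    have key : star x ⬝ᵥ (Matrix.of fun i j =>
          (min (r i) (r j)) ^ (l + 1) * (max (r i) (r j)) ^ (-l) / (2 * l + 1)
        : Matrix (Fin N) (Fin N) ℝ) *ᵥ x =
        (∑ k ∈ Finset.range N,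
          d k * (∑ i : Fin N, if k ≤ (i:ℕ) then y i else 0)^2) / (2*l+1) := by
      simp only [star_trivial, dotProduct, mulVec, of_apply, Finset.mul_sum]
      calc ∑ i : Fin N, ∑ j : Fin N,
              x i * ((min (r i) (r j)) ^ (l + 1) * (max (r i) (r j)) ^ (-l)
                / (2 * l + 1) * x j)
          = (∑ i : Fin N, ∑ j : Fin N,
              x i * ((min (r i) (r j)) ^ (l + 1) * (max (r i) (r j)) ^ (-l)) * x j)
              / (2*l+1) := by
            rw [Finset.sum_div]
            refine Finset.sum_congr rfl fun i _ => ?_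
            rw [Finset.sum_div]
            refine Finset.sum_congr rfl fun j _ => ?_
            ring
        _ = (∑ i : Fin N, ∑ j : Fin N, ∑ k ∈ Finset.range N,
              (if k ≤ (i:ℕ) then y i else 0) * (if k ≤ (j:ℕ) then y j else 0) * d k)
              / (2*l+1) := by
            congr 1
            refine Finset.sum_congr rfl fun i _ => Finset.sum_congr rfl fun j _ => ?_
            rw [hent i j,
              htsum (min (i:ℕ) (j:ℕ)) (lt_of_le_of_lt (min_le_left _ _) i.isLt)]
            calc x i * ((∑ k ∈ Finset.range N,
                    if k ≤ min (i:ℕ) (j:ℕ) then d k else 0)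
                    * (r i ^ (-l) * r j ^ (-l))) * x j
                = y i * y j * ∑ k ∈ Finset.range N,
                    if k ≤ min (i:ℕ) (j:ℕ) then d k else 0 := by
                  simp only [hy]; ring
              _ = ∑ k ∈ Finset.range N,
                    y i * y j * (if k ≤ min (i:ℕ) (j:ℕ) then d k else 0) := by
                  rw [Finset.mul_sum]
              _ = ∑ k ∈ Finset.range N,
                    (if k ≤ (i:ℕ) then y i else 0) * (if k ≤ (j:ℕ) then y j else 0)
                      * d k := by
                  refine Finset.sum_congr rfl fun k _ => ?_
                  simp only [le_min_iff]
                  exact ite_mul_helper _ _ _ _ _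
        _ = (∑ k ∈ Finset.range N, ∑ i : Fin N, ∑ j : Fin N,
              (if k ≤ (i:ℕ) then y i else 0) * (if k ≤ (j:ℕ) then y j else 0) * d k)
              / (2*l+1) := by
            congr 1
            exact (Finset.sum_congr rfl fun i _ => Finset.sum_comm).trans
              Finset.sum_comm
        _ = (∑ k ∈ Finset.range N,
              d k * (∑ i : Fin N, if k ≤ (i:ℕ) then y i else 0)^2) / (2*l+1) := by
            congr 1
            refine Finset.sum_congr rfl fun k _ => ?_
            rw [sq, Finset.sum_mul_sum, Finset.mul_sum]
            refine Finset.sum_congr rfl fun i _ => ?_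
            rw [Finset.mul_sum]
            refine Finset.sum_congr rfl fun j _ => ?_
            ring
    rw [key]
    apply div_nonneg _ h2l.le
    apply Finset.sum_nonneg
    intro k hk
    exact mul_nonneg (hdnn k (Finset.mem_range.mp hk)) (sq_nonneg _)
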